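/- arXiv:1301.1781 — 6 statements merged into one kernel-verified Lean document; each statement's English description precedes it below -/
import Mathlib

section
/- Let B be a finite-dimensional commutative ℝ-algebra with unit and let J ∈ B be a nonzero element contained in every nonzero ideal of B (i.e., (J) is the minimal nonzero ideal, the socle, of B). Let L₁, L₂ : B → ℝ be ℝ-linear maps with L₁(J) > 0 and L₂(J) > 0. Then the symmetric bilinear forms ⟨a,b⟩₁ = L₁(a·b) and ⟨a,b⟩₂ = L₂(a·b) on B are equivalent: there exists an ℝ-linear automorphism σ of B with L₂(σ(a)·σ(b)) = L₁(a·b) for all a, b ∈ B. In particular the signature sgn(B,J) of the form ⟨a,b⟩ = L(a·b) does not depend on the choice of the linear map L with L(J) > 0. -/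
/-- Newton-iteration lifting of square roots in a local ring with nilpotent
maximal ideal, assuming `2` is a unit. -/
lemma elk_aux_sqrt_lift {R : Type*} [CommRing R] [IsLocalRing R]
    (h2 : IsUnit (2 : R)) (hnil : IsNilpotent (IsLocalRing.maximalIdeal R))
    (c x : R) (hx : IsUnit x) (hmem : x ^ 2 - c ∈ IsLocalRing.maximalIdeal R) :
    ∃ d : R, IsUnit d ∧ d ^ 2 = c := by
  obtain ⟨N, hN⟩ := hnil
  set m := IsLocalRing.maximalIdeal R with hm
  have key : ∀ i : ℕ, ∃ d : R, IsUnit d ∧ d ^ 2 - c ∈ m ^ (2 ^ i) := by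
    intro i
    induction i with
    | zero => exact ⟨x, hx, by simpa using hmem⟩
    | succ i ih =>
      obtain ⟨d, hd, hdc⟩ := ih
      have h2d : IsUnit (2 * d) := h2.mul hd
      set v := Ring.inverse (2 * d) with hv0
      have hv : (2 * d) * v = 1 := Ring.mul_inverse_cancel _ h2d
      have hev : (d ^ 2 - c) * v ∈ m ^ (2 ^ i) := Ideal.mul_mem_right _ _ hdc
      have hevm : (d ^ 2 - c) * v ∈ m :=
        Ideal.pow_le_self (by positivity) hev
      refine ⟨d - (d ^ 2 - c) * v, ?_, ?_⟩
      · by_contra hnu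
        have h1 : d - (d ^ 2 - c) * v ∈ m := (IsLocalRing.mem_maximalIdeal _).mpr hnu
        have h3 : d ∈ m := by
          have := Ideal.add_mem m h1 hevm
          simpa using this
        exact ((IsLocalRing.mem_maximalIdeal _).mp h3) hd
      · have hcalc : (d - (d ^ 2 - c) * v) ^ 2 - c = ((d ^ 2 - c) * v) ^ 2 := by
          linear_combination (c - d ^ 2) * hv
        rw [hcalc, pow_succ, pow_mul]
        exact Ideal.pow_mem_pow hev 2
  obtain ⟨i, hi⟩ : ∃ i : ℕ, N ≤ 2 ^ i := ⟨N, (Nat.lt_two_pow_self (n := N)).le⟩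
  obtain ⟨d, hd, hdc⟩ := key i
  have hle : m ^ (2 ^ i) ≤ m ^ N := Ideal.pow_le_pow_right hi
  have hb : d ^ 2 - c ∈ (0 : Ideal R) := by
    rw [← hN]
    exact hle hdc
  rw [Submodule.zero_eq_bot] at hb
  exact ⟨d, hd, by rwa [Ideal.mem_bot, sub_eq_zero] at hb⟩

/-- In a finite-dimensional field extension of `ℝ`, every element is a square
or is a negative real scalar. -/
lemma elk_aux_sq_or_neg {k : Type*} [Field k] [Algebra ℝ k] [FiniteDimensional ℝ k]
    (x : k) : (∃ y : k, y ^ 2 = x) ∨ ∃ r : ℝ, r < 0 ∧ x = algebraMap ℝ k r := by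
  haveI : NoZeroSMulDivisors ℝ k :=
    inferInstance
  haveI : Algebra.IsAlgebraic ℝ k := Algebra.IsAlgebraic.of_finite ℝ k
  let f : k →ₐ[ℝ] ℂ := IsAlgClosed.lift
  have hinj : Function.Injective f := f.toRingHom.injective
  have hle : Module.finrank ℝ k ≤ 2 := by
    have := LinearMap.finrank_le_finrank_of_injective (f := f.toLinearMap) hinj
    simpa [Complex.finrank_real_complex] using this
  have hpos : 0 < Module.finrank ℝ k := Module.finrank_pos
  rcases (by omega : Module.finrank ℝ k = 1 ∨ Module.finrank ℝ k = 2) with h | h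
  · have hbot : (⊥ : Subalgebra ℝ k) = ⊤ := Subalgebra.bot_eq_top_of_finrank_eq_one h
    obtain ⟨r, hr⟩ : ∃ r : ℝ, algebraMap ℝ k r = x := by
      have hx : x ∈ (⊥ : Subalgebra ℝ k) := by rw [hbot]; trivial
      simpa [Algebra.mem_bot] using hx
    rcases le_or_gt 0 r with h0 | h0
    · exact Or.inl ⟨algebraMap ℝ k (Real.sqrt r), by
        rw [← map_pow, Real.sq_sqrt h0, hr]⟩
    · exact Or.inr ⟨r, h0, hr.symm⟩
  · left
    have hsurj : Function.Surjective f.toLinearMap :=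
      (LinearMap.injective_iff_surjective_of_finrank_eq_finrank
        (by rw [h, Complex.finrank_real_complex])).mp hinj
    obtain ⟨w, hw⟩ := IsAlgClosed.exists_pow_nat_eq (f x) (n := 2) (by norm_num)
    obtain ⟨y, hy⟩ := hsurj w
    refine ⟨y, hinj ?_⟩
    rw [map_pow]
    change (f.toLinearMap y) ^ 2 = _
    rw [hy, hw]

/-- Let `B` be a finite-dimensional commutative `ℝ`-algebra and `J ≠ 0` an
element contained in every nonzero ideal (so `(J)` is the socle of `B`).  If `L₁, L₂ : B → ℝ`
are `ℝ`-linear with `L₁ J > 0` and `L₂ J > 0`, then the symmetric bilinear forms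
`⟨a, b⟩ᵢ = Lᵢ (a * b)` are equivalent; in particular the signature `sgn (B, J)` does not
depend on the choice of `L` with `L J > 0`. -/
theorem elk_form_equivalence
    {B : Type*} [CommRing B] [Algebra ℝ B] [FiniteDimensional ℝ B]
    (J : B) (hJ : J ≠ 0) (hsoc : ∀ I : Ideal B, I ≠ ⊥ → J ∈ I)
    (L₁ L₂ : B →ₗ[ℝ] ℝ) (h₁ : 0 < L₁ J) (h₂ : 0 < L₂ J) :
    ∃ σ : B ≃ₗ[ℝ] B, ∀ a b : B, L₂ (σ a * σ b) = L₁ (a * b) := by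
  classical
  -- every nonzero element divides J
  have hdvd : ∀ a : B, a ≠ 0 → ∃ t : B, t * a = J := by
    intro a ha
    have : J ∈ Ideal.span {a} :=
      hsoc _ (by simpa [Ideal.span_singleton_eq_bot] using ha)
    rwa [Ideal.mem_span_singleton'] at this
  -- nonunits are zero divisors
  have hzd : ∀ a : B, ¬ IsUnit a → ∃ x : B, x ≠ 0 ∧ a * x = 0 := by
    intro a ha
    by_contra hx
    push_neg at hx
    have hinj : Function.Injective (LinearMap.mulLeft ℝ a) := by
      rw [← LinearMap.ker_eq_bot, eq_bot_iff]
      intro x hxk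
      have : a * x = 0 := hxk
      by_contra h0
      exact (hx x (by simpa using h0)) this
    have hsurj := (LinearMap.injective_iff_surjective).mp hinj
    obtain ⟨b, hb⟩ := hsurj 1
    exact ha (IsUnit.of_mul_eq_one (a := a) b (by simpa [mul_comm] using hb))
  haveI : Nontrivial B := ⟨⟨J, 0, hJ⟩⟩
  -- B is local
  haveI : IsLocalRing B := by
    apply IsLocalRing.of_isUnit_or_isUnit_one_sub_self
    intro a
    by_contra hcon
    push_neg at hcon
    obtain ⟨ha, ha'⟩ := hcon
    obtain ⟨x, hx0, hx⟩ := hzd a ha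
    obtain ⟨y, hy0, hy⟩ := hzd (1 - a) ha'
    obtain ⟨t, ht⟩ := hdvd x hx0
    obtain ⟨s, hs⟩ := hdvd y hy0
    have haJ : a * J = 0 := by
      rw [← ht]
      calc a * (t * x) = t * (a * x) := by ring
        _ = 0 := by rw [hx, mul_zero]
    have haJ' : (1 - a) * J = 0 := by
      rw [← hs]
      calc (1 - a) * (s * y) = s * ((1 - a) * y) := by ring
        _ = 0 := by rw [hy, mul_zero]
    apply hJ
    calc J = a * J + (1 - a) * J := by ring
      _ = 0 := by rw [haJ, haJ', add_zero]
  set m := IsLocalRing.maximalIdeal B with hmdef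
  -- the maximal ideal is nilpotent
  haveI : IsArtinianRing B := isArtinian_of_tower ℝ inferInstance
  have hnil : IsNilpotent m := by
    have := IsArtinianRing.isNilpotent_jacobson_bot (R := B)
    rwa [IsLocalRing.jacobson_eq_maximalIdeal ⊥ bot_ne_top] at this
  -- the maximal ideal kills J
  have hmJ : ∀ z ∈ m, z * J = 0 := by
    intro z hz
    by_contra h0
    obtain ⟨t, ht⟩ := hdvd (z * J) h0
    have h1 : (1 - t * z) * J = 0 := by
      have : t * (z * J) = J := ht
      calc (1 - t * z) * J = J - t * (z * J) := by ring
        _ = 0 := by rw [this, sub_self]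
    have hu : IsUnit (1 - t * z) := by
      by_contra hnu
      have h2 : (1 - t * z) ∈ m := (IsLocalRing.mem_maximalIdeal _).mpr hnu
      have h3 : t * z ∈ m := Ideal.mul_mem_left _ _ hz
      have : (1 : B) ∈ m := by
        have := Ideal.add_mem m h2 h3
        simpa using this
      exact (IsLocalRing.maximalIdeal.isMaximal B).ne_top (Ideal.eq_top_of_isUnit_mem _ this isUnit_one)
    obtain ⟨u, hu'⟩ := hu
    apply hJ
    calc J = (↑u⁻¹ * (1 - t * z)) * J := by
          rw [← hu', Units.inv_mul, one_mul]
      _ = ↑u⁻¹ * ((1 - t * z) * J) := by ring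
      _ = 0 := by rw [h1, mul_zero]
  -- the Riesz-type representation: L₂ = L₁ (c * ·)
  let T : B →ₗ[ℝ] Module.Dual ℝ B :=
    (LinearMap.llcomp ℝ B B ℝ L₁).comp (LinearMap.mul ℝ B)
  have hT : ∀ a b : B, T a b = L₁ (a * b) := fun a b => rfl
  have hTinj : Function.Injective T := by
    rw [← LinearMap.ker_eq_bot, eq_bot_iff]
    intro a hak
    by_contra ha0
    have ha0' : a ≠ 0 := by simpa using ha0
    obtain ⟨t, ht⟩ := hdvd a ha0'
    have : T a = 0 := hak
    have hz : L₁ (a * t) = 0 := by rw [← hT a t, this]; rfl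
    rw [mul_comm, ht] at hz
    exact absurd hz (ne_of_gt h₁)
  have hTsurj : Function.Surjective T :=
    (LinearMap.injective_iff_surjective_of_finrank_eq_finrank
      (Subspace.dual_finrank_eq).symm).mp hTinj
  obtain ⟨c, hc⟩ := hTsurj L₂
  have hcL : ∀ x : B, L₁ (c * x) = L₂ x := by
    intro x
    rw [← hT c x, hc]
  -- c is a unit
  have hcu : IsUnit c := by
    by_contra hnc
    obtain ⟨x, hx0, hx⟩ := hzd c hnc
    obtain ⟨t, ht⟩ := hdvd x hx0
    have : L₂ J = 0 := by
      rw [← ht, mul_comm t x, ← hcL]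
      calc L₁ (c * (x * t)) = L₁ ((c * x) * t) := by ring_nf
        _ = 0 := by rw [hx, zero_mul, map_zero]
    exact absurd this (ne_of_gt h₂)
  -- pass to the residue field
  haveI hmmax : m.IsMaximal := IsLocalRing.maximalIdeal.isMaximal B
  letI : Field (B ⧸ m) := Ideal.Quotient.field m
  haveI : FiniteDimensional ℝ (B ⧸ m) :=
    FiniteDimensional.of_surjective (Ideal.Quotient.mkₐ ℝ m).toLinearMap
      (Ideal.Quotient.mkₐ_surjective ℝ m)
  -- 2 is a unit in B
  have h2 : IsUnit (2 : B) := by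
    refine IsUnit.of_mul_eq_one (a := (2 : B)) (algebraMap ℝ B 2⁻¹) ?_
    have h2' : algebraMap ℝ B 2 = 2 := map_ofNat _ 2
    rw [← h2', ← map_mul]
    norm_num
  -- find a square root of c mod m
  have hsq : ∃ y : B, IsUnit y ∧ y ^ 2 - c ∈ m := by
    rcases elk_aux_sq_or_neg (Ideal.Quotient.mk m c : B ⧸ m) with ⟨yb, hyb⟩ | ⟨r, hr, hrc⟩
    · obtain ⟨y, hy⟩ := Ideal.Quotient.mk_surjective yb
      refine ⟨y, ?_, ?_⟩
      · by_contra hny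
        have hym : y ∈ m := (IsLocalRing.mem_maximalIdeal _).mpr hny
        have : (Ideal.Quotient.mk m) y = 0 := Ideal.Quotient.eq_zero_iff_mem.mpr hym
        rw [this] at hy
        rw [← hy] at hyb
        simp only [ne_eq, zero_pow, OfNat.ofNat_ne_zero, not_false_eq_true] at hyb
        have hcm : c ∈ m := Ideal.Quotient.eq_zero_iff_mem.mp hyb.symm
        exact ((IsLocalRing.mem_maximalIdeal _).mp hcm) hcu
      · rw [← Ideal.Quotient.eq_zero_iff_mem]
        rw [map_sub, map_pow, hy, hyb, sub_self]
    · -- contradiction with positivity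
      exfalso
      have hcr : c - algebraMap ℝ B r ∈ m := by
        rw [← Ideal.Quotient.eq_zero_iff_mem, map_sub, sub_eq_zero, hrc]
        rfl
      have hcJ : c * J = r • J := by
        have := hmJ _ hcr
        have h' : (c - algebraMap ℝ B r) * J = 0 := this
        have : c * J = algebraMap ℝ B r * J := by linear_combination h'
        rw [this, Algebra.smul_def]
      have : L₂ J = r * L₁ J := by
        rw [← hcL, hcJ, map_smul, smul_eq_mul]
      nlinarith
  obtain ⟨y, hyu, hym⟩ := hsq
  obtain ⟨d, hdu, hdc⟩ := elk_aux_sqrt_lift h2 hnil c y hyu hym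
  -- build the equivalence: multiplication by d⁻¹
  obtain ⟨u, hu⟩ := hdu
  have hdv : d * ↑u⁻¹ = 1 := by rw [← hu]; exact u.mul_inv
  let σ : B ≃ₗ[ℝ] B :=
    LinearEquiv.ofLinear (LinearMap.mulLeft ℝ (↑u⁻¹ : B)) (LinearMap.mulLeft ℝ d)
      (by ext x; simp only [LinearMap.coe_comp, Function.comp_apply,
            LinearMap.mulLeft_apply, LinearMap.id_coe, id_eq]
          calc (↑u⁻¹ : B) * (d * x) = (d * ↑u⁻¹) * x := by ring
            _ = x := by rw [hdv, one_mul])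
      (by ext x; simp only [LinearMap.coe_comp, Function.comp_apply,
            LinearMap.mulLeft_apply, LinearMap.id_coe, id_eq]
          calc d * ((↑u⁻¹ : B) * x) = (d * ↑u⁻¹) * x := by ring
            _ = x := by rw [hdv, one_mul])
  refine ⟨σ, fun a b => ?_⟩
  have hσ : ∀ x : B, σ x = (↑u⁻¹ : B) * x := fun x => rfl
  rw [hσ a, hσ b, ← hcL]
  congr 1
  have hc1 : c * ((↑u⁻¹ : B) * (↑u⁻¹ : B)) = 1 := by
    rw [← hdc]
    calc d ^ 2 * ((↑u⁻¹ : B) * ↑u⁻¹) = (d * ↑u⁻¹) * (d * ↑u⁻¹) := by ring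
      _ = 1 := by rw [hdv, one_mul]
  calc c * ((↑u⁻¹ : B) * a * ((↑u⁻¹ : B) * b))
      = (c * ((↑u⁻¹ : B) * ↑u⁻¹)) * (a * b) := by ring
    _ = a * b := by rw [hc1, one_mul]
end

section
/- Let B be a finite-dimensional commutative ℝ-algebra with unit and let J ∈ B be a nonzero element contained in every nonzero ideal of B (i.e., (J) is the minimal nonzero ideal, the socle, of B). Let L : B → ℝ be an ℝ-linear map with L(J) ≠ 0, and let h ∈ B. Then the radical of the symmetric bilinear form T(a,b) = L(h·a·b) on B equals the annihilator Ann(h) = {g ∈ B : g·h = 0}; that is, for a ∈ B one has L(h·a·b) = 0 for all b ∈ B if and only if a·h = 0. Consequently T induces a well-defined nondegenerate symmetric bilinear form ⟨[a],[b]⟩ = L(h·a·b) on the quotient algebra B/Ann(h). -/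
/-- Let `B` be a finite-dimensional commutative `ℝ`-algebra and `J ≠ 0` an
element contained in every nonzero ideal (so `(J)` is the socle of `B`).  For any `ℝ`-linear
`L : B → ℝ` with `L J ≠ 0` and any `h ∈ B`, the radical of the symmetric bilinear form
`T (a, b) = L (h * a * b)` equals the annihilator `Ann h = {g : B | g * h = 0}`:
`L (h * a * b) = 0` for all `b` if and only if `a * h = 0`.  (Consequently `T` induces a
well-defined nondegenerate symmetric bilinear form on `B ⧸ Ann h`.) -/
theorem radical_of_relative_form_eq_annihilator
    {B : Type*} [CommRing B] [Algebra ℝ B] [FiniteDimensional ℝ B]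
    (J : B) (hJ : J ≠ 0) (hsoc : ∀ I : Ideal B, I ≠ ⊥ → J ∈ I)
    (L : B →ₗ[ℝ] ℝ) (hL : L J ≠ 0) (h : B) :
    ∀ a : B, (∀ b : B, L (h * a * b) = 0) ↔ a * h = 0 := by
  intro a
  constructor
  · intro hall
    by_contra hne
    have hmem : J ∈ Ideal.span {a * h} := by
      apply hsoc
      simp [Ideal.span_singleton_eq_bot, hne]
    obtain ⟨c, hc⟩ := Ideal.mem_span_singleton'.mp hmem
    apply hL
    have : h * a * c = J := by rw [← hc]; ring
    rw [← this]
    exact hall c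
  · intro hah b
    have : h * a * b = 0 := by
      rw [show h * a = a * h by ring, hah, zero_mul]
    rw [this, map_zero]
end

section
/- Let B be a nonzero finite-dimensional commutative local ℝ-algebra with maximal ideal m, and suppose the annihilator of the maximal ideal, {b ∈ B : b·x = 0 for all x ∈ m}, is a one-dimensional ℝ-subspace spanned by an element J. Let h ∈ B with h ≠ 0, and let c ∈ B be any element with c·h = J. Then the quotient algebra B' = B/Ann(h), where Ann(h) = {g ∈ B : g·h = 0}, is a local ℝ-algebra whose socle is one-dimensional: the annihilator of the maximal ideal of B' is the one-dimensional ℝ-subspace spanned by the class [c] of c, and [c] ≠ 0 in B'. (In other words, B/Ann(h) has a one-dimensional socle generated by the element J/h, which is well defined in the quotient.) -/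
/-- The annihilator ideal `Ann h = {g : B | g * h = 0}` of an element `h` of a commutative
ring `B`. -/
def Ann {B : Type*} [CommRing B] (h : B) : Ideal B where
  carrier := {g : B | g * h = 0}
  add_mem' := by
    intro a b ha hb
    simp only [Set.mem_setOf_eq] at *
    rw [add_mul, ha, hb, add_zero]
  zero_mem' := by simp
  smul_mem' := by
    intro c a ha
    simp only [Set.mem_setOf_eq, smul_eq_mul] at *
    rw [mul_assoc, ha, mul_zero]

/-- Let `B` be a nonzero finite-dimensional commutative local `ℝ`-algebra whose
socle (the annihilator of the maximal ideal) is the one-dimensional subspace spanned by `J`.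
Let `h ≠ 0` and let `c` satisfy `c * h = J`.  Then the quotient `B ⧸ Ann h` is a local
`ℝ`-algebra whose socle is the one-dimensional subspace spanned by the (nonzero) class of
`c`, i.e. of `J / h`. -/
theorem quotient_by_annihilator_has_one_dimensional_socle
    {B : Type*} [CommRing B] [Algebra ℝ B] [IsLocalRing B] [FiniteDimensional ℝ B]
    (J : B) (hJ : J ≠ 0)
    (hsoc : {b : B | ∀ x ∈ IsLocalRing.maximalIdeal B, b * x = 0} =
            {b : B | ∃ r : ℝ, b = r • J})
    (h : B) (hh : h ≠ 0) (c : B) (hc : c * h = J) :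
    ∃ inst : IsLocalRing (B ⧸ Ann h),
      Ideal.Quotient.mk (Ann h) c ≠ 0 ∧
      {b' : B ⧸ Ann h | ∀ x ∈ @IsLocalRing.maximalIdeal (B ⧸ Ann h) _ inst, b' * x = 0}
        = {b' : B ⧸ Ann h | ∃ r : ℝ, b' = r • Ideal.Quotient.mk (Ann h) c} := by
  have hmk0 : ∀ x : B, Ideal.Quotient.mk (Ann h) x = 0 ↔ x * h = 0 := fun x =>
    Ideal.Quotient.eq_zero_iff_mem
  have hne_top : Ann h ≠ ⊤ := by
    intro H
    apply hh
    have h1 : (1 : B) ∈ Ann h := H ▸ Submodule.mem_top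
    simpa using (show (1 : B) * h = 0 from h1)
  haveI : Nontrivial (B ⧸ Ann h) := Ideal.Quotient.nontrivial_iff.mpr hne_top
  haveI inst : IsLocalRing (B ⧸ Ann h) :=
    IsLocalRing.of_surjective' (Ideal.Quotient.mk (Ann h)) Ideal.Quotient.mk_surjective
  have hAnnle : Ann h ≤ IsLocalRing.maximalIdeal B := IsLocalRing.le_maximalIdeal hne_top
  have hsmul : ∀ (r : ℝ) (x : B),
      r • Ideal.Quotient.mk (Ann h) x = Ideal.Quotient.mk (Ann h) (r • x) := by
    intro r x
    rw [← Ideal.Quotient.mkₐ_eq_mk ℝ (Ann h), ← map_smul]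
  -- J annihilates the maximal ideal
  have hJann : ∀ x ∈ IsLocalRing.maximalIdeal B, J * x = 0 := by
    have : J ∈ {b : B | ∃ r : ℝ, b = r • J} := ⟨1, (one_smul ℝ J).symm⟩
    rw [← hsoc] at this
    exact this
  -- characterization of the maximal ideal of the quotient
  have hmem : ∀ x : B, Ideal.Quotient.mk (Ann h) x ∈ IsLocalRing.maximalIdeal (B ⧸ Ann h) ↔
      x ∈ IsLocalRing.maximalIdeal B := by
    intro x
    constructor
    · intro hx
      rw [IsLocalRing.mem_maximalIdeal] at *
      intro hu
      exact hx (hu.map _)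
    · intro hx
      rw [IsLocalRing.mem_maximalIdeal]
      intro hu
      rcases hu with ⟨u, hu⟩
      obtain ⟨y, hy⟩ := Ideal.Quotient.mk_surjective ((u⁻¹ : (B ⧸ Ann h)ˣ) : B ⧸ Ann h)
      have hxy1 : Ideal.Quotient.mk (Ann h) (x * y - 1) = 0 := by
        rw [map_sub, map_mul, map_one, hy, ← hu, Units.mul_inv, sub_self]
      have hmem1 : x * y - 1 ∈ IsLocalRing.maximalIdeal B :=
        hAnnle (Ideal.Quotient.eq_zero_iff_mem.mp hxy1)
      have hxy : x * y ∈ IsLocalRing.maximalIdeal B :=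
        Ideal.mul_mem_right y _ hx
      have h1 : (1 : B) ∈ IsLocalRing.maximalIdeal B := by
        have h2 := Submodule.sub_mem _ hxy hmem1
        simp only [sub_sub_cancel] at h2
        exact h2
      exact (IsLocalRing.maximalIdeal.isMaximal B).ne_top (Ideal.eq_top_iff_one _ |>.mpr h1)
  refine ⟨inst, ?_, ?_⟩
  · intro H
    exact hJ (hc ▸ (hmk0 c).mp H)
  · ext b'
    obtain ⟨b, rfl⟩ := Ideal.Quotient.mk_surjective b'
    simp only [Set.mem_setOf_eq]
    constructor
    · intro hb
      have hbh : b * h ∈ {b : B | ∀ x ∈ IsLocalRing.maximalIdeal B, b * x = 0} := by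
        intro x hx
        have hmx : Ideal.Quotient.mk (Ann h) x ∈ IsLocalRing.maximalIdeal (B ⧸ Ann h) :=
          (hmem x).mpr hx
        have := hb _ hmx
        rw [← map_mul] at this
        have hbx : b * x * h = 0 := (hmk0 _).mp this
        calc b * h * x = b * x * h := by ring
        _ = 0 := hbx
      rw [hsoc] at hbh
      obtain ⟨r, hr⟩ := hbh
      refine ⟨r, ?_⟩
      rw [hsmul]
      rw [Ideal.Quotient.eq]
      show (b - r • c) * h = 0
      rw [sub_mul, smul_mul_assoc, hc, ← hr, sub_self]
    · rintro ⟨r, hbr⟩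
      intro x' hx'
      rw [hbr]
      obtain ⟨x, rfl⟩ := Ideal.Quotient.mk_surjective x'
      have hx : x ∈ IsLocalRing.maximalIdeal B := (hmem x).mp hx'
      rw [hsmul, ← map_mul]
      have : r • c * x * h = 0 := by
        have hJx : J * x = 0 := hJann x hx
        calc r • c * x * h = r • (J * x) := by rw [← hc]; rw [smul_mul_assoc, smul_mul_assoc]; ring_nf
        _ = 0 := by rw [hJx, smul_zero]
      exact (hmk0 _).mpr this
end

section
/- Let V be a finite-dimensional real vector space and T : V × V → ℝ a symmetric bilinear form. Suppose there exists a linear automorphism σ of V with T(σ(x), σ(y)) = −T(x,y) for all x, y ∈ V. Then there exists a subspace W ⊆ V with 2·dim W ≥ dim V such that T(w,w') = 0 for all w, w' ∈ W. (Equivalently, a symmetric bilinear form admitting an anti-isometry has signature zero.) -/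
open Module Submodule

section AntiIsoAux

set_option linter.unusedSectionVars false

variable {V : Type*} [AddCommGroup V] [Module ℝ V] [FiniteDimensional ℝ V]


lemma aux_diag {ι : Type*} [Fintype ι] [DecidableEq ι]
    (T : V →ₗ[ℝ] V →ₗ[ℝ] ℝ) (B : Basis ι ℝ V)
    (hortho : ∀ i j : ι, i ≠ j → T (B i) (B j) = 0) (v : V) :
    T v v = ∑ i, (B.repr v i) * (B.repr v i) * T (B i) (B i) := by
  conv_lhs => rw [← B.sum_repr v]
  rw [map_sum]
  refine Finset.sum_congr rfl fun i _ => ?_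
  rw [map_sum, LinearMap.sum_apply, Finset.sum_eq_single i]
  · simp [mul_assoc, mul_comm, mul_left_comm]
  · intro j _ hj
    simp [hortho j i hj]
  · simp

lemma aux_nonneg {ι : Type*} [Fintype ι] [DecidableEq ι]
    (T : V →ₗ[ℝ] V →ₗ[ℝ] ℝ) (B : Basis ι ℝ V)
    (hortho : ∀ i j : ι, i ≠ j → T (B i) (B j) = 0) (s : Finset ι)
    (hs : ∀ i ∈ s, 0 ≤ T (B i) (B i)) {v : V}
    (hv : v ∈ span ℝ (B '' (s : Set ι))) : 0 ≤ T v v := by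
  rw [aux_diag T B hortho v]
  refine Finset.sum_nonneg fun i _ => ?_
  by_cases h : B.repr v i = 0
  · simp [h]
  · have hi : i ∈ s := (B.mem_span_image.mp hv) (Finsupp.mem_support_iff.mpr h)
    exact mul_nonneg (mul_self_nonneg _) (hs i hi)

lemma aux_def_zero {ι : Type*} [Fintype ι] [DecidableEq ι]
    (T : V →ₗ[ℝ] V →ₗ[ℝ] ℝ) (B : Basis ι ℝ V)
    (hortho : ∀ i j : ι, i ≠ j → T (B i) (B j) = 0) (s : Finset ι)
    (hs : ∀ i ∈ s, 0 < T (B i) (B i)) {v : V}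
    (hv : v ∈ span ℝ (B '' (s : Set ι))) (h0 : T v v = 0) : v = 0 := by
  rw [aux_diag T B hortho v] at h0
  have hnn : ∀ i ∈ Finset.univ, (0:ℝ) ≤ (B.repr v i) * (B.repr v i) * T (B i) (B i) := by
    intro i _
    by_cases h : B.repr v i = 0
    · simp [h]
    · have hi : i ∈ s := (B.mem_span_image.mp hv) (Finsupp.mem_support_iff.mpr h)
      exact mul_nonneg (mul_self_nonneg _) (hs i hi).le
  have hterm := (Finset.sum_eq_zero_iff_of_nonneg hnn).mp h0
  have hr : B.repr v = 0 := by
    ext i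
    by_contra h
    have hi : i ∈ s := (B.mem_span_image.mp hv) (Finsupp.mem_support_iff.mpr h)
    have := hterm i (Finset.mem_univ i)
    have hpos : (0:ℝ) < (B.repr v i) * (B.repr v i) * T (B i) (B i) :=
      mul_pos (mul_self_pos.mpr h) (hs i hi)
    exact hpos.ne' this
  have := B.repr.map_eq_zero_iff.mp hr
  exact this

lemma aux_span_finrank {ι : Type*} [Fintype ι] [DecidableEq ι]
    (B : Basis ι ℝ V) (s : Finset ι) :
    finrank ℝ (span ℝ (B '' (s : Set ι))) = s.card := by
  have hli : LinearIndependent ℝ (fun i : s => B i) :=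
    B.linearIndependent.comp Subtype.val Subtype.val_injective
  have hrange : Set.range (fun i : s => B i) = B '' (s : Set ι) := by
    ext x; simp [Set.mem_image]
  rw [← hrange, finrank_span_eq_card hli, Fintype.card_coe]

lemma aux_card_le {ι : Type*} [Fintype ι] [DecidableEq ι]
    (T : V →ₗ[ℝ] V →ₗ[ℝ] ℝ) (B : Basis ι ℝ V)
    (hortho : ∀ i j : ι, i ≠ j → T (B i) (B j) = 0)
    (σ : V ≃ₗ[ℝ] V) (hσ : ∀ x y : V, T (σ x) (σ y) = - T x y) :
    (Finset.univ.filter fun i => 0 < T (B i) (B i)).card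
      ≤ (Finset.univ.filter fun i => T (B i) (B i) < 0).card := by
  classical
  set d : ι → ℝ := fun i => T (B i) (B i) with hd
  set sp : Finset ι := Finset.univ.filter fun i => 0 < d i with hsp
  set snn : Finset ι := Finset.univ.filter fun i => 0 ≤ d i with hsnn
  set P : Submodule ℝ V := span ℝ (B '' (sp : Set ι)) with hP
  set Q : Submodule ℝ V := span ℝ (B '' (snn : Set ι)) with hQ
  set P' : Submodule ℝ V := P.map (σ : V →ₗ[ℝ] V) with hP'
  have hdisj : Disjoint P' Q := by
    rw [disjoint_def]
    rintro x hx hxQ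
    obtain ⟨u, hu, rfl⟩ := hx
    have h1 : 0 ≤ T u u := aux_nonneg T B hortho sp
      (fun i hi => ((Finset.mem_filter.mp hi).2).le) hu
    have h2 : 0 ≤ T (σ u) (σ u) := aux_nonneg T B hortho snn
      (fun i hi => (Finset.mem_filter.mp hi).2) hxQ
    rw [hσ] at h2
    have h0 : T u u = 0 := le_antisymm (by linarith) h1
    have : u = 0 := aux_def_zero T B hortho sp
      (fun i hi => (Finset.mem_filter.mp hi).2) hu h0
    simp [this]
  have hdim := Submodule.finrank_add_finrank_le_of_disjoint hdisj
  have hfP' : finrank ℝ P' = sp.card := by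
    rw [hP', LinearEquiv.finrank_map_eq, hP, aux_span_finrank]
  have hfQ : finrank ℝ Q = snn.card := aux_span_finrank B snn
  have hVcard : finrank ℝ V = Fintype.card ι := finrank_eq_card_basis B
  have hsplit : snn.card + (Finset.univ.filter fun i => d i < 0).card = Fintype.card ι := by
    rw [hsnn]
    have := Finset.card_filter_add_card_filter_not
      (s := (Finset.univ : Finset ι)) (p := fun i => 0 ≤ d i)
    simpa [not_le] using this
  have heq : (Finset.univ.filter fun i => T (B i) (B i) < 0) = (Finset.univ.filter fun i => d i < 0) := rfl
  rw [heq]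
  omega

end AntiIsoAux

set_option maxHeartbeats 1000000 in
/-- A symmetric bilinear form on a finite-dimensional real vector space that
admits an anti-isometry (a linear automorphism `σ` with `T (σ x) (σ y) = - T x y`) has a
totally isotropic subspace of at least half the dimension (hence signature zero). -/
theorem anti_isometry_gives_half_dimensional_isotropic
    {V : Type*} [AddCommGroup V] [Module ℝ V] [FiniteDimensional ℝ V]
    (T : V →ₗ[ℝ] V →ₗ[ℝ] ℝ) (hsymm : ∀ x y : V, T x y = T y x)
    (σ : V ≃ₗ[ℝ] V) (hσ : ∀ x y : V, T (σ x) (σ y) = - T x y) :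
    ∃ W : Submodule ℝ V,
      Module.finrank ℝ V ≤ 2 * Module.finrank ℝ W ∧
      ∀ w ∈ W, ∀ w' ∈ W, T w w' = 0 := by
  obtain ⟨B, hB⟩ := LinearMap.BilinForm.exists_orthogonal_basis
    (B := T) ⟨fun x y => hsymm x y⟩
  have hortho : ∀ i j, i ≠ j → T (B i) (B j) = 0 := fun i j h => by exact hB h
  set d : Fin (finrank ℝ V) → ℝ := fun i => T (B i) (B i) with hd
  -- signature is zero: #positive = #negative
  have hpq : (Finset.univ.filter fun i => 0 < d i).card
      = (Finset.univ.filter fun i => d i < 0).card := by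
    refine le_antisymm (aux_card_le T B hortho σ hσ) ?_
    have h2 := aux_card_le (-T) B (fun i j h => by
        simpa using hortho i j h) σ (fun x y => by simp [hσ x y])
    have e1 : (Finset.univ.filter fun i => 0 < (-T) (B i) (B i))
        = (Finset.univ.filter fun i => d i < 0) :=
      Finset.filter_congr (fun i _ => by simp [hd])
    have e2 : (Finset.univ.filter fun i => (-T) (B i) (B i) < 0)
        = (Finset.univ.filter fun i => 0 < d i) :=
      Finset.filter_congr (fun i _ => by simp [hd])
    rwa [e1, e2] at h2
  -- pair up positive and negative indices
  have hcards : Fintype.card {i : Fin (finrank ℝ V) // d i < 0} = Fintype.card {i : Fin (finrank ℝ V) // 0 < d i} := by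
    rw [Fintype.card_subtype, Fintype.card_subtype, hpq]
  let e : {i : Fin (finrank ℝ V) // d i < 0} ≃ {i : Fin (finrank ℝ V) // 0 < d i} := Fintype.equivOfCardEq hcards
  let t : {i : Fin (finrank ℝ V) // d i < 0} → ℝ := fun j => Real.sqrt (d (e j).1 / (- d j.1))
  have harg : ∀ j, 0 < d (e j).1 / (- d j.1) := fun j =>
    div_pos (e j).2 (neg_pos.mpr j.2)
  have ht : ∀ j, 0 < t j := fun j => Real.sqrt_pos.mpr (harg j)
  have htsq : ∀ j, t j * t j * d j.1 = - d (e j).1 := by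
    intro j
    have h1 : t j * t j = d (e j).1 / (- d j.1) := Real.mul_self_sqrt (harg j).le
    have h2 : d j.1 ≠ 0 := ne_of_lt j.2
    rw [h1]; rw [div_mul_eq_mul_div, mul_div_assoc, div_neg, div_self h2, mul_neg, mul_one]
  let w : (({i : Fin (finrank ℝ V) // d i < 0}) ⊕ ({i : Fin (finrank ℝ V) // d i = 0})) → V := fun k => Sum.elim (fun j => B (e j).1 + t j • B j.1) (fun i => B i.1) k
  -- basic index disequalities
  have hne1 : ∀ (j j' : {i : Fin (finrank ℝ V) // d i < 0}), (e j).1 ≠ j'.1 := by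
    intro j j' h
    have := (e j).2
    rw [h] at this
    exact absurd j'.2 (asymm this)
  have hne2 : ∀ (j : {i : Fin (finrank ℝ V) // d i < 0})
      (i : {i : Fin (finrank ℝ V) // d i = 0}), (e j).1 ≠ i.1 := by
    intro j i h
    have := (e j).2
    rw [h, i.2] at this
    exact lt_irrefl 0 this
  have hne3 : ∀ (j : {i : Fin (finrank ℝ V) // d i < 0})
      (i : {i : Fin (finrank ℝ V) // d i = 0}), j.1 ≠ i.1 := by
    intro j i h
    have := j.2
    rw [h, i.2] at this
    exact lt_irrefl 0 this
  let idx : (({i : Fin (finrank ℝ V) // d i < 0}) ⊕ ({i : Fin (finrank ℝ V) // d i = 0})) → Fin (finrank ℝ V) := Sum.elim (fun j => j.1) (fun i => i.1)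
  let scale : (({i : Fin (finrank ℝ V) // d i < 0}) ⊕ ({i : Fin (finrank ℝ V) // d i = 0})) → ℝ := Sum.elim t (fun _ => 1)
  have hscale : ∀ k, scale k ≠ 0 := by
    rintro (j | i)
    · exact (ht j).ne'
    · exact one_ne_zero
  have hrep : ∀ k k' : (({i : Fin (finrank ℝ V) // d i < 0}) ⊕ ({i : Fin (finrank ℝ V) // d i = 0})), B.repr (w k') (idx k) = if k' = k then scale k else 0 := by
    rintro (j0 | i0) (j | i)
    · simp only [w, idx, scale, Sum.elim_inl, map_add, map_smul, Finsupp.add_apply,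
        Finsupp.smul_apply, Basis.repr_self, smul_eq_mul, Finsupp.single_apply,
        Sum.inl.injEq]
      rw [if_neg (hne1 j j0)]
      by_cases h : j = j0
      · subst h
        simp
      · have h' : j.1 ≠ j0.1 := fun hv => h (Subtype.ext hv)
        simp [h', h]
    · simp only [w, idx, scale, Sum.elim_inr, Sum.elim_inl, Basis.repr_self,
        Finsupp.single_apply]
      have : i.1 ≠ j0.1 := fun hv => hne3 j0 i hv.symm
      simp [this]
    · simp only [w, idx, scale, Sum.elim_inl, Sum.elim_inr, map_add, map_smul,
        Finsupp.add_apply, Finsupp.smul_apply, Basis.repr_self, smul_eq_mul,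
        Finsupp.single_apply]
      rw [if_neg (hne2 j i0), if_neg (hne3 j i0)]
      simp
    · simp only [w, idx, scale, Sum.elim_inr, Basis.repr_self, Finsupp.single_apply,
        Sum.inr.injEq]
      by_cases h : i = i0
      · subst h; simp
      · have h' : i.1 ≠ i0.1 := fun hv => h (Subtype.ext hv)
        simp [h', h]
  have li : LinearIndependent ℝ w := by
    rw [linearIndependent_iff']
    intro s g hsum k hk
    have h0 := congrArg (fun v => B.repr v (idx k)) hsum
    simp only [map_sum, map_smul, Finsupp.coe_finset_sum, Finset.sum_apply,
      Finsupp.coe_smul, Pi.smul_apply, smul_eq_mul, map_zero, Finsupp.coe_zero,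
      Pi.zero_apply] at h0
    rw [Finset.sum_eq_single_of_mem k hk (fun k' _ hne => by
      rw [hrep k k', if_neg hne, mul_zero])] at h0
    rw [hrep k k, if_pos rfl] at h0
    exact (mul_eq_zero.mp h0).resolve_right (hscale k)
  have hpair : ∀ k k' : (({i : Fin (finrank ℝ V) // d i < 0}) ⊕ ({i : Fin (finrank ℝ V) // d i = 0})), T (w k) (w k') = 0 := by
    rintro (j | i) (j' | i')
    · simp only [w, Sum.elim_inl, map_add, map_smul, LinearMap.add_apply,
        LinearMap.smul_apply, smul_eq_mul]
      rw [hortho _ _ (hne1 j j'), hortho _ _ (hne1 j' j).symm]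
      by_cases h : j = j'
      · subst h
        have h1 := htsq j
        have h2 : T (B (e j).1) (B (e j).1) = d (e j).1 := rfl
        have h3 : T (B j.1) (B j.1) = d j.1 := rfl
        rw [h2, h3]
        ring_nf
        nlinarith [htsq j]
      · rw [hortho _ _ (fun hv => h (e.injective (Subtype.ext hv))),
          hortho _ _ (fun hv => h (Subtype.ext hv))]
        ring
    · simp only [w, Sum.elim_inl, Sum.elim_inr, map_add, map_smul,
        LinearMap.add_apply, LinearMap.smul_apply, smul_eq_mul]
      rw [hortho _ _ (hne2 j i'), hortho _ _ (hne3 j i')]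
      ring
    · simp only [w, Sum.elim_inl, Sum.elim_inr, map_add, map_smul,
        LinearMap.add_apply, LinearMap.smul_apply, smul_eq_mul]
      rw [hortho _ _ (hne2 j' i).symm, hortho _ _ (hne3 j' i).symm]
      ring
    · simp only [w, Sum.elim_inr]
      by_cases h : i.1 = i'.1
      · have : T (B i.1) (B i'.1) = d i.1 := by rw [Subtype.ext h]
        rw [h]
        exact i'.2
      · exact hortho _ _ h
  refine ⟨span ℝ (Set.range w), ?_, ?_⟩
  · have hfr : finrank ℝ (span ℝ (Set.range w)) = Fintype.card (({i : Fin (finrank ℝ V) // d i < 0}) ⊕ ({i : Fin (finrank ℝ V) // d i = 0})) :=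
      finrank_span_eq_card li
    have hcard : Fintype.card (({i : Fin (finrank ℝ V) // d i < 0}) ⊕ ({i : Fin (finrank ℝ V) // d i = 0}))
        = (Finset.univ.filter fun i => d i < 0).card
          + (Finset.univ.filter fun i => d i = 0).card := by
      rw [Fintype.card_sum, Fintype.card_subtype, Fintype.card_subtype]
    have hsplit1 := Finset.card_filter_add_card_filter_not
      (s := (Finset.univ : Finset (Fin (finrank ℝ V)))) (p := fun i => 0 < d i)
    have hsplit2 : (Finset.univ.filter fun i => ¬ 0 < d i).card
        = (Finset.univ.filter fun i => d i < 0).card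
          + (Finset.univ.filter fun i => d i = 0).card := by
      rw [← Finset.card_union_of_disjoint (by
        simp only [Finset.disjoint_left, Finset.mem_filter]
        rintro i ⟨-, h1⟩ ⟨-, h2⟩
        exact absurd h2 h1.ne)]
      congr 1
      ext i
      simp only [Finset.mem_filter, Finset.mem_union, Finset.mem_univ, true_and, not_lt]
      constructor
      · intro h
        rcases lt_or_eq_of_le h with h' | h'
        · exact Or.inl h'
        · exact Or.inr h'
      · rintro (h | h)
        · exact h.le
        · exact le_of_eq h
    have hcu : (Finset.univ : Finset (Fin (finrank ℝ V))).card = finrank ℝ V := by simp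
    rw [hfr, hcard]
    omega
  · intro a ha b hb
    have h1 : ∀ k, span ℝ (Set.range w) ≤ LinearMap.ker (T (w k)) := by
      intro k
      rw [span_le]
      rintro _ ⟨k', rfl⟩
      exact LinearMap.mem_ker.mpr (hpair k k')
    have h2 : span ℝ (Set.range w) ≤ LinearMap.ker (T.flip b) := by
      rw [span_le]
      rintro _ ⟨k, rfl⟩
      exact LinearMap.mem_ker.mpr (h1 k hb)
    exact h2 ha
end

section
/- Let A be a finite-dimensional commutative ℝ-algebra with unit, L : A → ℝ an ℝ-linear map, f ∈ A, and m ≥ 1 an integer. Let K_m = Ann(f) ∩ (f^{m-1}) be the ideal of elements a ∈ A with a·f = 0 and a ∈ f^{m-1}·A. Then the prescription ⟨a,a'⟩_{f,m} = L(b·a'), where b ∈ A is any element with a = f^{m-1}·b, defines a well-defined symmetric bilinear form on K_m: for a, a' ∈ K_m the value L(b·a') does not depend on the choice of b with a = f^{m-1}·b, and L(b·a') = L(b'·a) whenever a = f^{m-1}·b and a' = f^{m-1}·b'. -/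
/-- Let `A` be a finite-dimensional commutative `ℝ`-algebra, `L : A → ℝ`
`ℝ`-linear, `f ∈ A` and `m ≥ 1`.  On `K m = Ann f ∩ (f ^ (m - 1))`, the prescription
`⟨a, a'⟩ = L (b * a')`, where `a = f ^ (m - 1) * b`, is well defined (independent of the
choice of `b`) and symmetric. -/
theorem flag_form_well_defined_and_symmetric
    {A : Type*} [CommRing A] [Algebra ℝ A] [FiniteDimensional ℝ A]
    (L : A →ₗ[ℝ] ℝ) (f : A) (m : ℕ) (hm : 1 ≤ m)
    (a a' : A) (ha : a * f = 0) (ha' : a' * f = 0)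
    (hamem : ∃ b : A, a = f ^ (m - 1) * b) (ha'mem : ∃ b' : A, a' = f ^ (m - 1) * b') :
    (∀ b₁ b₂ : A, a = f ^ (m - 1) * b₁ → a = f ^ (m - 1) * b₂ →
      L (b₁ * a') = L (b₂ * a')) ∧
    (∀ b b' : A, a = f ^ (m - 1) * b → a' = f ^ (m - 1) * b' →
      L (b * a') = L (b' * a)) := by
  constructor
  · rintro b₁ b₂ h₁ h₂
    obtain ⟨b', hb'⟩ := ha'mem
    have : b₁ * a' = b₂ * a' := by
      have e₁ : b₁ * a' = a * b' := by rw [hb', h₁]; ring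
      have e₂ : b₂ * a' = a * b' := by rw [hb', h₂]; ring
      rw [e₁, e₂]
    rw [this]
  · rintro b b' hb hb'
    have : b * a' = b' * a := by rw [hb, hb']; ring
    rw [this]
end

section
/- Let A be a finite-dimensional commutative ℝ-algebra with unit, L : A → ℝ an ℝ-linear map, f ∈ A, and m ≥ 1 an integer. Let K_m = Ann(f) ∩ (f^{m-1}) and let ⟨a,a'⟩_{f,m} = L(b·a') for a = f^{m-1}·b be the associated symmetric bilinear form on K_m. Then K_{m+1} ⊆ K_m and the form ⟨ , ⟩_{f,m} vanishes on K_{m+1}: for every a ∈ K_{m+1} and every a' ∈ K_m one has ⟨a,a'⟩_{f,m} = 0. Consequently ⟨ , ⟩_{f,m} induces a well-defined symmetric bilinear form on the quotient K_m/K_{m+1}. -/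
/-- The flag of ideals `K m = Ann f ∩ (f ^ (m - 1))` (as a subset of `A`): elements
annihilating `f` that are divisible by `f ^ (m - 1)`. -/
def Kflag {A : Type*} [CommRing A] (f : A) (m : ℕ) : Set A :=
  {a : A | a * f = 0 ∧ ∃ b : A, a = f ^ (m - 1) * b}

/-- With `K m = Ann f ∩ (f ^ (m - 1))` and the bilinear form
`⟨a, a'⟩_{f,m} = L (b * a')` for `a = f ^ (m - 1) * b`, one has `K (m + 1) ⊆ K m` and the
form `⟨ , ⟩_{f,m}` vanishes whenever its first argument lies in `K (m + 1)`; consequently it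
induces a well-defined symmetric bilinear form on the quotient `K m / K (m + 1)`. -/
theorem flag_form_vanishes_on_next_step
    {A : Type*} [CommRing A] [Algebra ℝ A] [FiniteDimensional ℝ A]
    (L : A →ₗ[ℝ] ℝ) (f : A) (m : ℕ) (hm : 1 ≤ m) :
    Kflag f (m + 1) ⊆ Kflag f m ∧
    (∀ a ∈ Kflag f (m + 1), ∀ a' ∈ Kflag f m,
      ∀ b : A, a = f ^ (m - 1) * b → L (b * a') = 0) := by
  obtain ⟨n, rfl⟩ : ∃ n, m = n + 1 := ⟨m - 1, by omega⟩
  simp only [Kflag, Nat.add_sub_cancel]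
  constructor
  · rintro a ⟨haf, c, hac⟩
    exact ⟨haf, f * c, by rw [hac]; ring⟩
  · rintro a ⟨haf, c, hac⟩ a' ⟨ha'f, b', rfl⟩ b hab
    have hfb : f ^ n * b = f ^ (n + 1) * c := by rw [← hab, hac]
    have hz : b * (f ^ n * b') = 0 := by linear_combination b' * hfb + c * ha'f
    rw [hz, map_zero]
end
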